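/- arXiv:math/0208170 — 2 statements merged into one kernel-verified Lean document; each statement's English description precedes it below -/
import Mathlib

section
/- (Cigler) Let q ∈ ℝ with q > 0, q ≠ 1, and assume q^j ≠ 1 for 1 ≤ j ≤ n. For every function f : ℝ → ℝ and every real x ≠ 0, the scaling operator (Df)(x) = f(qx) satisfies (D^n f)(x) = f(q^n x) = Σ_{m=0}^n [n choose m]_q (q−1)^m x^m q^{m(m−1)/2} (D_q^m f)(x). -/
noncomputable def jackson (q : ℝ) (f : ℝ → ℝ) : ℝ → ℝ :=
  fun x => (f (q * x) - f x) / ((q - 1) * x)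

def scaleOp (q : ℝ) (f : ℝ → ℝ) : ℝ → ℝ := fun x => f (q * x)

noncomputable def qBinom (q : ℝ) (n m : ℕ) : ℝ :=
  ∏ i ∈ Finset.range m, (q ^ (n - i) - 1) / (q ^ (i + 1) - 1)

lemma tri (k : ℕ) : (k+1)*k/2 = k*(k-1)/2 + k := by
  cases k with
  | zero => rfl
  | succ j =>
    have h : (j+1+1)*(j+1) = (j+1)*(j+1-1) + (j+1)*2 := by
      simp only [Nat.add_sub_cancel]; ring
    rw [h, Nat.add_mul_div_right _ _ (by norm_num : 0 < 2)]

lemma qBinom_zero (q : ℝ) (n : ℕ) : qBinom q n 0 = 1 := by simp [qBinom]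

lemma qBinom_overflow (q : ℝ) (n : ℕ) : qBinom q n (n+1) = 0 := by
  apply Finset.prod_eq_zero (Finset.self_mem_range_succ n)
  simp

lemma qBinom_pascal (q : ℝ) (n k : ℕ) (hk : k ≤ n)
    (hden : ∀ j : ℕ, 1 ≤ j → j ≤ k+1 → q ^ j ≠ 1) :
    qBinom q (n+1) (k+1) = q^(k+1) * qBinom q n (k+1) + qBinom q n k := by
  have hD : (∏ i ∈ Finset.range k, (q^(i+1)-1)) ≠ 0 := by
    apply Finset.prod_ne_zero_iff.mpr
    intro i hi
    simp only [Finset.mem_range] at hi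
    exact sub_ne_zero.mpr (hden (i+1) (by omega) (by omega))
  have hd1 : q^(k+1) - 1 ≠ 0 := sub_ne_zero.mpr (hden (k+1) (by omega) le_rfl)
  have hnum1 : ∏ i ∈ Finset.range (k+1), (q^(n+1-i)-1)
      = (q^(n+1)-1) * ∏ i ∈ Finset.range k, (q^(n-i)-1) := by
    rw [Finset.prod_range_succ']
    simp only [Nat.succ_sub_succ, Nat.sub_zero]
    ring
  have hnum2 : ∏ i ∈ Finset.range (k+1), (q^(n-i)-1)
      = (∏ i ∈ Finset.range k, (q^(n-i)-1)) * (q^(n-k)-1) := Finset.prod_range_succ _ _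
  have hden2 : ∏ i ∈ Finset.range (k+1), (q^(i+1)-1)
      = (∏ i ∈ Finset.range k, (q^(i+1)-1)) * (q^(k+1)-1) := Finset.prod_range_succ _ _
  have hpow : q^(n+1) = q^(n-k) * q^(k+1) := by
    rw [← pow_add]; congr 1; omega
  unfold qBinom
  rw [Finset.prod_div_distrib, Finset.prod_div_distrib, Finset.prod_div_distrib,
    hnum1, hnum2, hden2, hpow]
  field_simp
  ring

lemma scale_iter (q : ℝ) (f : ℝ → ℝ) : ∀ (n : ℕ) (x : ℝ), (scaleOp q)^[n] f x = f (q^n * x) := by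
  intro n
  induction n with
  | zero => intro x; simp
  | succ n IH =>
    intro x
    rw [Function.iterate_succ_apply']
    show ((scaleOp q)^[n] f) (q * x) = _
    rw [IH]
    congr 1
    ring

lemma key (q : ℝ) (hq0 : 0 < q) (hq1 : q ≠ 1) :
    ∀ n : ℕ, (∀ j : ℕ, 1 ≤ j → j ≤ n → q ^ j ≠ 1) → ∀ x : ℝ, x ≠ 0 → ∀ f : ℝ → ℝ,
      f (q ^ n * x) = ∑ m ∈ Finset.range (n + 1),
        qBinom q n m * (q - 1) ^ m * x ^ m * q ^ (m * (m - 1) / 2) * (jackson q)^[m] f x := by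
  intro n
  induction n with
  | zero => intro _ x hx f; simp [qBinom]
  | succ n IH =>
    intro hqn x hx f
    have hqx : q * x ≠ 0 := mul_ne_zero (ne_of_gt hq0) hx
    have hIH := IH (fun j h1 h2 => hqn j h1 (Nat.le_succ_of_le h2)) (q*x) hqx f
    have hqm1x : (q-1)*x ≠ 0 := mul_ne_zero (sub_ne_zero.mpr hq1) hx
    have hJ : ∀ m : ℕ, (jackson q)^[m] f (q*x)
        = (jackson q)^[m] f x + (q-1)*x*((jackson q)^[m+1] f x) := by
      intro m
      rw [Function.iterate_succ_apply']
      simp only [jackson]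
      rw [mul_comm ((q-1)*x), div_mul_cancel₀ _ hqm1x]
      ring
    have hstep : (q:ℝ)^(n+1) * x = q^n * (q*x) := by ring
    rw [hstep, hIH]
    have hsplit : ∑ m ∈ Finset.range (n+1),
        qBinom q n m * (q-1)^m * (q*x)^m * q^(m*(m-1)/2) * (jackson q)^[m] f (q*x)
      = (∑ m ∈ Finset.range (n+1),
          qBinom q n m * (q-1)^m * x^m * q^(m*(m-1)/2) * q^m * ((jackson q)^[m] f x))
        + (∑ m ∈ Finset.range (n+1),
          qBinom q n m * (q-1)^(m+1) * x^(m+1) * q^(m*(m-1)/2) * q^m * ((jackson q)^[m+1] f x)) := by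
      rw [← Finset.sum_add_distrib]
      refine Finset.sum_congr rfl fun m _ => ?_
      rw [hJ m, mul_pow]
      ring
    rw [hsplit]
    have hA : (∑ m ∈ Finset.range (n+1),
          qBinom q n m * (q-1)^m * x^m * q^(m*(m-1)/2) * q^m * ((jackson q)^[m] f x))
        = ∑ m ∈ Finset.range (n+2),
          qBinom q n m * (q-1)^m * x^m * q^(m*(m-1)/2) * q^m * ((jackson q)^[m] f x) := by
      rw [Finset.sum_range_succ (n := n+1), qBinom_overflow]
      ring
    rw [hA, Finset.sum_range_succ' _ (n+1),
      Finset.sum_range_succ' (fun m => qBinom q (n+1) m * (q-1)^m * x^m * q^(m*(m-1)/2) * (jackson q)^[m] f x) (n+1)]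
    simp only [qBinom_zero, Nat.zero_mul, Nat.zero_div, pow_zero, Function.iterate_zero_apply,
      one_mul, mul_one]
    rw [add_assoc, add_comm (f x), ← add_assoc, ← Finset.sum_add_distrib]
    congr 1
    refine Finset.sum_congr rfl fun k hk => ?_
    simp only [Finset.mem_range] at hk
    have hkn : k ≤ n := by omega
    have hden : ∀ j : ℕ, 1 ≤ j → j ≤ k+1 → q ^ j ≠ 1 := fun j h1 h2 => hqn j h1 (by omega)
    show _ = qBinom q (n+1) (k+1) * (q-1)^(k+1) * x^(k+1) * q^((k+1)*((k+1)-1)/2) * (jackson q)^[k+1] f x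
    rw [qBinom_pascal q n k hkn hden]
    simp only [Nat.add_sub_cancel]
    rw [tri, pow_add]
    ring

/-- (Cigler) The expansion of the n-th power of the scaling operator in terms of
iterated Jackson q-derivatives:
`(D^n f)(x) = f(q^n x) = Σ_{m=0}^n [n choose m]_q (q−1)^m x^m q^{m(m−1)/2}(D_q^m f)(x)`. -/
theorem cigler_scale_pow (q : ℝ) (n : ℕ) (hq0 : 0 < q) (hq1 : q ≠ 1)
    (hqn : ∀ j : ℕ, 1 ≤ j → j ≤ n → q ^ j ≠ 1) (f : ℝ → ℝ) (x : ℝ) (hx : x ≠ 0) :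
    (scaleOp q)^[n] f x = f (q ^ n * x) ∧
    f (q ^ n * x) =
      ∑ m ∈ Finset.range (n + 1),
        qBinom q n m * (q - 1) ^ m * x ^ m * q ^ (m * (m - 1) / 2) *
          (jackson q)^[m] f x := by
  exact ⟨scale_iter q f n x, key q hq0 hq1 n hqn x hx f⟩
end

section
/- Let q ∈ ℝ with 0 < q < 1, let k ≥ 1, let N ≥ k and t ∈ ℝ^N, and define c_i(x) = (1−q)^i x^i/(i(1−q^i)) and the q-Schur polynomial p̃_k(x,t) = p_k(t₁+c₁(x), …, t_k+c_k(x)) (with t_i = 0 for i > N). Then for every real x ≠ 0: (i) (D_q^x p̃_k)(x,t) = p̃_{k−1}(x,t), where D_q^x is the Jackson q-derivative in the variable x; and (ii) ∂p̃_k/∂t₁ (x,t) = p̃_{k−1}(x,t). -/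
/-- The elementary Schur polynomials `p_n` in variables `X 1, X 2, …`, defined by the
generating function `Σ p_n z^n = exp(Σ_{k≥1} X_k z^k)`, via the equivalent recursion
`(n+1) p_{n+1} = Σ_{k=0}^{n} (k+1) X_{k+1} p_{n−k}`, with `p_0 = 1`. -/
noncomputable def schurPoly : ℕ → MvPolynomial ℕ ℝ
  | 0 => 1
  | n + 1 =>
      MvPolynomial.C (((n : ℝ) + 1)⁻¹) *
        ∑ k ∈ Finset.range (n + 1),
          MvPolynomial.C ((k : ℝ) + 1) * MvPolynomial.X (k + 1) * schurPoly (n - k)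
decreasing_by exact Nat.lt_succ_of_le (Nat.sub_le n k)

/-- The sequence `i ↦ t_i + c_i(x)` (1-based), where `c_i(x) = (1−q)^i x^i/(i(1−q^i))`
and `t_i = 0` for `i > N`. -/
noncomputable def shiftedArg (q x : ℝ) (N : ℕ) (t : Fin N → ℝ) : ℕ → ℝ :=
  fun i =>
    (if h : 1 ≤ i ∧ i - 1 < N then t ⟨i - 1, h.2⟩ else 0) +
      (1 - q) ^ i * x ^ i / ((i : ℝ) * (1 - q ^ i))

/-- The q-Schur polynomial `p̃_k(x,t) = p_k(t + c(x))`. -/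
noncomputable def qSchur (q : ℝ) (N : ℕ) (k : ℕ) (x : ℝ) (t : Fin N → ℝ) : ℝ :=
  MvPolynomial.eval (shiftedArg q x N t) (schurPoly k)


section Aux
open MvPolynomial Finset

lemma schur_eval_succ (a : ℕ → ℝ) (n : ℕ) :
    eval a (schurPoly (n+1)) =
      ((n:ℝ)+1)⁻¹ * ∑ k ∈ range (n + 1), ((k:ℝ)+1) * a (k+1) * eval a (schurPoly (n-k)) := by
  rw [schurPoly]
  simp [mul_assoc]

lemma schur_sum_eq (a : ℕ → ℝ) (m : ℕ) :
    ∑ k ∈ range (m + 1), ((k:ℝ)+1) * a (k+1) * eval a (schurPoly (m-k))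
      = ((m:ℝ)+1) * eval a (schurPoly (m+1)) := by
  rw [schur_eval_succ, ← mul_assoc, mul_inv_cancel₀ (by positivity), one_mul]

lemma tri_swap (f : ℕ → ℕ → ℝ) (n : ℕ) :
    ∑ k ∈ range (n+1), ∑ j ∈ range (n-k+1), f k j
      = ∑ j ∈ range (n+1), ∑ k ∈ range (n-j+1), f k j :=
  Finset.sum_comm' (by intro x y; simp only [mem_range]; omega)

lemma schur_shift (a : ℕ → ℝ) (u : ℝ) (k : ℕ) :
    eval (fun i => a i + u^i / (i:ℝ)) (schurPoly k)
      = ∑ j ∈ range (k+1), u^j * eval a (schurPoly (k-j)) := by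
  induction k using Nat.strong_induction_on with
  | _ k ih =>
    match k with
    | 0 => simp [schurPoly]
    | n + 1 =>
      have hswap : ∀ (x y : ℕ), x ∈ range (n+1) ∧ y ∈ range (n-x+1) ↔
          x ∈ range (n-y+1) ∧ y ∈ range (n+1) := by
        intro x y; simp only [mem_range]; omega
      rw [schur_eval_succ]
      have step1 : ∑ k ∈ range (n + 1),
            ((k:ℝ)+1) * ((fun i => a i + u^i / (i:ℝ)) (k+1)) *
              eval (fun i => a i + u^i / (i:ℝ)) (schurPoly (n-k))
          = ∑ k ∈ range (n + 1),
              ((((k:ℝ)+1) * a (k+1)) * ∑ j ∈ range (n-k+1), u^j * eval a (schurPoly (n-k-j))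
               + u^(k+1) * ∑ j ∈ range (n-k+1), u^j * eval a (schurPoly (n-k-j))) := by
        refine sum_congr rfl fun k hk => ?_
        rw [ih (n-k) (by omega), ← add_mul]
        congr 1
        have h1 : ((k:ℝ)+1) ≠ 0 := by positivity
        push_cast
        field_simp
      rw [step1, sum_add_distrib]
      have hA : ∑ k ∈ range (n + 1),
            (((k:ℝ)+1) * a (k+1)) * ∑ j ∈ range (n-k+1), u^j * eval a (schurPoly (n-k-j))
          = ∑ j ∈ range (n+2), ((n+1-j : ℕ):ℝ) * (u^j * eval a (schurPoly (n+1-j))) := by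
        have : ∑ k ∈ range (n + 1),
              (((k:ℝ)+1) * a (k+1)) * ∑ j ∈ range (n-k+1), u^j * eval a (schurPoly (n-k-j))
            = ∑ k ∈ range (n + 1), ∑ j ∈ range (n-k+1),
                u^j * (((k:ℝ)+1) * a (k+1) * eval a (schurPoly (n-j-k))) := by
          refine sum_congr rfl fun k hk => ?_
          rw [mul_sum]
          refine sum_congr rfl fun j hj => ?_
          have : n - k - j = n - j - k := by omega
          rw [this]; ring
        rw [this]
        rw [tri_swap (fun k j => u^j * (((k:ℝ)+1) * a (k+1) * eval a (schurPoly (n-j-k)))) n]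
        conv_rhs => rw [sum_range_succ]
        simp only [Nat.sub_self, Nat.cast_zero, zero_mul, add_zero]
        refine sum_congr rfl fun j hj => ?_
        rw [← mul_sum, schur_sum_eq a (n - j)]
        have hj' : j < n + 1 := mem_range.mp hj
        have e1 : n + 1 - j = n - j + 1 := by omega
        rw [e1]; push_cast; ring
      have hB : ∑ k ∈ range (n + 1),
            u^(k+1) * ∑ j ∈ range (n-k+1), u^j * eval a (schurPoly (n-k-j))
          = ∑ j ∈ range (n+2), (j:ℝ) * (u^j * eval a (schurPoly (n+1-j))) := by
        have h1 : ∑ k ∈ range (n + 1),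
              u^(k+1) * ∑ j ∈ range (n-k+1), u^j * eval a (schurPoly (n-k-j))
            = ∑ k ∈ range (n + 1), ∑ j ∈ range (n-k+1),
                u^(n+1-j) * eval a (schurPoly j) := by
          refine sum_congr rfl fun k hk => ?_
          rw [mul_sum]
          rw [← sum_range_reflect (fun j => u^(k+1) * (u^j * eval a (schurPoly (n-k-j)))) (n-k+1)]
          refine sum_congr rfl fun j hj => ?_
          have hk' : k < n + 1 := mem_range.mp hk
          have hj' : j < n - k + 1 := mem_range.mp hj
          have e1 : n - k + 1 - 1 - j = n - k - j := by omega
          have e2 : n - k - (n - k - j) = j := by omega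
          rw [e1, e2, ← mul_assoc, ← pow_add]
          congr 2
          omega
        rw [h1]
        rw [tri_swap (fun k j => u^(n+1-j) * eval a (schurPoly j)) n]
        have h2 : ∀ j ∈ range (n+1), ∑ _k ∈ range (n-j+1), u^(n+1-j) * eval a (schurPoly j)
            = ((n-j+1 : ℕ):ℝ) * (u^(n+1-j) * eval a (schurPoly j)) := by
          intro j hj
          rw [sum_const, card_range, nsmul_eq_mul]
        rw [sum_congr rfl h2]
        rw [← sum_range_reflect
          (fun j => ((n-j+1 : ℕ):ℝ) * (u^(n+1-j) * eval a (schurPoly j))) (n+1)]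
        rw [sum_range_succ' (fun j => (j:ℝ) * (u^j * eval a (schurPoly (n+1-j)))) (n+1)]
        simp only [Nat.cast_zero, zero_mul, add_zero]
        refine sum_congr rfl fun j hj => ?_
        have hj' : j < n + 1 := mem_range.mp hj
        have e1 : n + 1 - 1 - j = n - j := by omega
        rw [e1]
        have e2 : n - (n - j) + 1 = j + 1 := by omega
        have e3 : n + 1 - (n - j) = j + 1 := by omega
        have e5 : n + 1 - (j + 1) = n - j := by omega
        rw [e2, e3, e5]
      rw [hA, hB, ← sum_add_distrib]
      have h3 : ∀ j ∈ range (n+2),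
          ((n+1-j : ℕ):ℝ) * (u^j * eval a (schurPoly (n+1-j)))
            + (j:ℝ) * (u^j * eval a (schurPoly (n+1-j)))
          = ((n:ℝ)+1) * (u^j * eval a (schurPoly (n+1-j))) := by
        intro j hj
        have hj' : j < n + 2 := mem_range.mp hj
        have : ((n+1-j : ℕ):ℝ) = ((n:ℝ)+1) - (j:ℝ) := by
          rw [Nat.cast_sub (by omega)]; push_cast; ring
        rw [this]; ring
      rw [sum_congr rfl h3, ← mul_sum, ← mul_assoc, inv_mul_cancel₀ (by positivity), one_mul]

lemma schur_sum_eq_poly (m : ℕ) :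
    ∑ k ∈ range (m+1), C ((k:ℝ)+1) * X (k+1) * schurPoly (m-k)
      = C ((m:ℝ)+1) * schurPoly (m+1) := by
  conv_rhs => rw [schurPoly]
  rw [← mul_assoc, ← C_mul, mul_inv_cancel₀ (by positivity : ((m:ℝ)+1) ≠ 0), C_1, one_mul]

lemma pderiv_schur (k : ℕ) :
    (pderiv 1) (schurPoly k) = if k = 0 then 0 else schurPoly (k-1) := by
  induction k using Nat.strong_induction_on with
  | _ k ih =>
  match k with
  | 0 => simp [schurPoly]
  | n + 1 =>
    rw [if_neg (Nat.succ_ne_zero n), Nat.add_sub_cancel]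
    rw [schurPoly, pderiv_C_mul, map_sum]
    have hterm : ∀ k ∈ range (n+1),
        (pderiv 1) (C ((k:ℝ)+1) * X (k+1) * schurPoly (n-k))
          = C ((k:ℝ)+1) * ((Pi.single (M := fun _ => MvPolynomial ℕ ℝ) 1 1 (k+1)) * schurPoly (n-k))
            + C ((k:ℝ)+1) * (X (k+1) * (if n - k = 0 then 0 else schurPoly (n-k-1))) := by
      intro k hk
      rw [mul_assoc, pderiv_C_mul, pderiv_mul, pderiv_X, ih (n-k) (by omega), mul_add]
    rw [sum_congr rfl hterm, sum_add_distrib]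
    have hS1 : ∑ k ∈ range (n+1),
        C ((k:ℝ)+1) * ((Pi.single (M := fun _ => MvPolynomial ℕ ℝ) 1 1 (k+1)) * schurPoly (n-k))
          = schurPoly n := by
      rw [sum_range_succ']
      have : ∀ k ∈ range n,
          C (((k+1:ℕ):ℝ)+1) * ((Pi.single (M := fun _ => MvPolynomial ℕ ℝ) 1 1 (k+1+1)) * schurPoly (n-(k+1)))
            = 0 := by
        intro k hk
        rw [Pi.single_eq_of_ne (by omega : k+1+1 ≠ 1), zero_mul, mul_zero]
      rw [sum_congr rfl this, sum_const_zero, zero_add]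
      simp [Pi.single_eq_same]
    have hS2 : ∑ k ∈ range (n+1),
        C ((k:ℝ)+1) * (X (k+1) * (if n - k = 0 then 0 else schurPoly (n-k-1)))
          = C ((n:ℝ)) * schurPoly n := by
      match n with
      | 0 => simp
      | m + 1 =>
        rw [sum_range_succ, Nat.sub_self, if_pos rfl, mul_zero, mul_zero, add_zero]
        have : ∀ k ∈ range (m+1),
            C ((k:ℝ)+1) * (X (k+1) * (if m + 1 - k = 0 then 0 else schurPoly (m+1-k-1)))
              = C ((k:ℝ)+1) * X (k+1) * schurPoly (m-k) := by
          intro k hk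
          have hk' : k < m + 1 := mem_range.mp hk
          rw [if_neg (by omega), mul_assoc]
          congr 3
          omega
        rw [sum_congr rfl this, schur_sum_eq_poly m]
        push_cast
        ring
    rw [hS1, hS2]
    have : schurPoly n + C ((n:ℝ)) * schurPoly n = C ((n:ℝ)+1) * schurPoly n := by
      rw [map_add, C_1, add_mul, one_mul, add_comm]
    rw [this, ← mul_assoc, ← C_mul, inv_mul_cancel₀ (by positivity : ((n:ℝ)+1) ≠ 0), C_1, one_mul]

lemma hasDerivAt_eval_update (i : ℕ) (s : ℕ → ℝ) (c : ℝ) (P : MvPolynomial ℕ ℝ) :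
    HasDerivAt (fun a => eval (Function.update s i a) P)
      (eval (Function.update s i c) ((pderiv i) P)) c := by
  induction P using MvPolynomial.induction_on with
  | C r =>
      simp only [eval_C, pderiv_C, map_zero]
      exact hasDerivAt_const c r
  | add p q hp hq =>
      simp only [map_add]
      exact hp.add hq
  | mul_X p j hp =>
      have hu : HasDerivAt (fun a => Function.update s i a j) (if i = j then 1 else 0) c := by
        rcases eq_or_ne i j with h | h
        · subst h
          simp only [Function.update_self, if_pos rfl]
          exact hasDerivAt_id c
        · have : (fun a => Function.update s i a j) = fun _ => s j := by
            funext a; exact Function.update_of_ne (Ne.symm h) a s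
          rw [this, if_neg h]
          exact hasDerivAt_const c (s j)
      have hmul := hp.mul hu
      have hfun : (fun a => eval (Function.update s i a) (p * X j))
          = fun a => eval (Function.update s i a) p * Function.update s i a j := by
        funext a; rw [eval_mul, eval_X]
      have hval : eval (Function.update s i c) ((pderiv i) (p * X j))
          = eval (Function.update s i c) ((pderiv i) p) * Function.update s i c j
            + eval (Function.update s i c) p * (if i = j then 1 else 0) := by
        rw [pderiv_mul, map_add, eval_mul, eval_mul, eval_X, pderiv_X]
        congr 1
        rcases eq_or_ne i j with h | h
        · subst h; simp [Pi.single_eq_same]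
        · simp [Pi.single_eq_of_ne (Ne.symm h), if_neg h]
      rw [hfun, hval]
      exact hmul

lemma shiftedArg_decomp (q x : ℝ) (hq0 : 0 < q) (hq1 : q < 1) (N : ℕ) (t : Fin N → ℝ) :
    shiftedArg q x N t = fun i => shiftedArg q (q*x) N t i + ((1-q)*x)^i / (i:ℝ) := by
  funext i
  unfold shiftedArg
  match i with
  | 0 => norm_num
  | i + 1 =>
    have h1 : (((i:ℕ):ℝ)+1) ≠ 0 := by positivity
    have h2 : (1:ℝ) - q^(i+1) ≠ 0 := by
      have : q^(i+1) < 1 := pow_lt_one₀ hq0.le hq1 (Nat.succ_ne_zero i)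
      linarith
    rw [add_assoc]
    congr 1
    rw [mul_pow, mul_pow]
    push_cast
    field_simp
    ring

lemma qSchur_expand (q : ℝ) (hq0 : 0 < q) (hq1 : q < 1) (N k : ℕ) (t : Fin N → ℝ) (x : ℝ) :
    qSchur q N k x t = ∑ j ∈ range (k+1), ((1-q)*x)^j * qSchur q N (k-j) (q*x) t := by
  unfold qSchur
  rw [shiftedArg_decomp q x hq0 hq1 N t]
  exact schur_shift (shiftedArg q (q*x) N t) ((1-q)*x) k

lemma qSchur_qx (q : ℝ) (hq0 : 0 < q) (hq1 : q < 1) (N m : ℕ) (t : Fin N → ℝ) (x : ℝ) :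
    qSchur q N (m+1) x t
      = qSchur q N (m+1) (q*x) t + (1-q)*x * qSchur q N m x t := by
  rw [qSchur_expand q hq0 hq1 N (m+1) t x, sum_range_succ']
  rw [qSchur_expand q hq0 hq1 N m t x, mul_sum]
  rw [pow_zero, one_mul, Nat.sub_zero, add_comm]
  congr 1
  refine sum_congr rfl fun j hj => ?_
  rw [pow_succ]
  have : m + 1 - (j + 1) = m - j := by omega
  rw [this]
  ring

end Aux

/-- The q-Schur polynomials satisfy `D_q^x p̃_k = p̃_{k−1}` and `∂p̃_k/∂t₁ = p̃_{k−1}`. -/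
theorem qSchur_jackson_and_deriv (q : ℝ) (hq0 : 0 < q) (hq1 : q < 1) (k N : ℕ)
    (hk : 1 ≤ k) (hkN : k ≤ N) (t : Fin N → ℝ) (x : ℝ) (hx : x ≠ 0) :
    jackson q (fun y => qSchur q N k y t) x = qSchur q N (k - 1) x t ∧
    deriv (fun a => qSchur q N k x (Function.update t (⟨0, by omega⟩ : Fin N) a))
        (t (⟨0, by omega⟩ : Fin N)) = qSchur q N (k - 1) x t := by
  have hN : 0 < N := by omega
  obtain ⟨m, rfl⟩ : ∃ m, k = m + 1 := ⟨k - 1, by omega⟩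
  have hq1' : (1:ℝ) - q ≠ 0 := by linarith
  have hqx : (q - 1) * x ≠ 0 := mul_ne_zero (by intro h; apply hq1'; linarith) hx
  constructor
  · -- Jackson derivative part
    have hrel := qSchur_qx q hq0 hq1 N m t x
    unfold jackson
    have hnum : qSchur q N (m+1) (q*x) t - qSchur q N (m+1) x t
        = (q - 1) * x * qSchur q N m x t := by
      rw [hrel]; ring
    rw [hnum, Nat.add_sub_cancel, mul_div_cancel_left₀ _ hqx]
  · -- t₁-derivative part
    set s : ℕ → ℝ := shiftedArg q x N t with hs
    have hq2 : (1:ℝ) - q ^ 1 ≠ 0 := by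
      simpa using hq1'
    have hc1 : (1 - q) ^ 1 * x ^ 1 / (((1:ℕ):ℝ) * (1 - q ^ 1)) = x := by
      push_cast
      field_simp
    have hs1 : s 1 = t ⟨0, hN⟩ + x := by
      rw [hs]
      unfold shiftedArg
      rw [dif_pos ⟨le_refl 1, by omega⟩, hc1]
    have hfun : ∀ a : ℝ, shiftedArg q x N (Function.update t (⟨0, by omega⟩ : Fin N) a)
        = Function.update s 1 (a + x) := by
      intro a
      funext i
      match i with
      | 0 =>
        rw [Function.update_of_ne (by omega : (0:ℕ) ≠ 1), hs]
        unfold shiftedArg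
        norm_num
      | 1 =>
        rw [Function.update_self]
        unfold shiftedArg
        rw [dif_pos ⟨le_refl 1, by omega⟩, hc1]
        congr 1
      | (i+2) =>
        rw [Function.update_of_ne (by omega : (i+2:ℕ) ≠ 1), hs]
        unfold shiftedArg
        congr 1
    have hD := hasDerivAt_eval_update 1 s (t ⟨0, hN⟩ + x) (schurPoly (m+1))
    have hshift : HasDerivAt (fun a : ℝ => a + x) 1 (t ⟨0, hN⟩) :=
      (hasDerivAt_id _).add_const x
    have hcomp := hD.comp (t ⟨0, hN⟩) hshift
    have hfun2 : (fun a => qSchur q N (m+1) x (Function.update t (⟨0, by omega⟩ : Fin N) a))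
        = fun a => MvPolynomial.eval (Function.update s 1 (a + x)) (schurPoly (m+1)) := by
      funext a
      unfold qSchur
      rw [hfun a]
    rw [hfun2]
    have hder : HasDerivAt
        (fun a => MvPolynomial.eval (Function.update s 1 (a + x)) (schurPoly (m+1)))
        (MvPolynomial.eval (Function.update s 1 (t ⟨0, hN⟩ + x))
          ((MvPolynomial.pderiv 1) (schurPoly (m+1))) * 1) (t ⟨0, hN⟩) := hcomp
    rw [hder.deriv, mul_one, pderiv_schur, if_neg (Nat.succ_ne_zero m), Nat.add_sub_cancel]
    rw [show t ⟨0, hN⟩ + x = s 1 from hs1.symm, Function.update_eq_self]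
    rfl
end
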